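/- For every n ∈ ℕ there exists a constant γ̂_n ∈ (0,∞), depending only on n, with the following property: for every probability vector p = (p_i)_{i∈ℕ} on ℕ, every m ∈ ℕ, and every family ξ_1, …, ξ_m of i.i.d. ℕ-valued random variables with P(ξ_j = i) = p_i, one has E[(∑_{i=1}^∞ (μ_i^m − p_i)²)^n] ≤ γ̂_n / m^n, where μ_i^m := (1/m) ∑_{j=1}^m 1{ξ_j = i}. -/

import Mathlib

open MeasureTheory ProbabilityTheory

namespace Stmt16Aux


noncomputable def g (p : ℕ → ℝ) (x y : ℕ) : ℝ :=
  (if x = y then 1 else 0) - p x - p y + ∑' i, (p i) ^ 2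

variable {p : ℕ → ℝ}

section
variable (hp0 : ∀ i, 0 ≤ p i) (hp1 : HasSum p 1)
include hp0 hp1

lemma p_le_one (i : ℕ) : p i ≤ 1 := le_hasSum hp1 i (fun j _ => hp0 j)

lemma sq_summable : Summable (fun i => (p i) ^ 2) := by
  refine Summable.of_nonneg_of_le (fun i => sq_nonneg _) (fun i => ?_) hp1.summable
  nlinarith [hp0 i, p_le_one hp0 hp1 i]

end
section
variable (hp0 : ∀ i, 0 ≤ p i) (hp1 : HasSum p 1)
include hp0 hp1
lemma K_nonneg : 0 ≤ ∑' i, (p i) ^ 2 := tsum_nonneg (fun i => sq_nonneg _)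

lemma K_le_one : (∑' i, (p i) ^ 2) ≤ 1 := by
  calc (∑' i, (p i) ^ 2) ≤ ∑' i, p i := by
        refine Summable.tsum_le_tsum (fun i => ?_) (sq_summable hp0 hp1) hp1.summable
        nlinarith [hp0 i, p_le_one hp0 hp1 i]
    _ = 1 := hp1.tsum_eq

lemma abs_g_le (x y : ℕ) : |g p x y| ≤ 4 := by
  have h1 : (0:ℝ) ≤ (if x = y then (1:ℝ) else 0) := by positivity
  have h2 : (if x = y then (1:ℝ) else 0) ≤ 1 := by split <;> norm_num
  have := hp0 x; have := hp0 y
  have := p_le_one hp0 hp1 x; have := p_le_one hp0 hp1 y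
  have := K_nonneg (p := p) hp0 hp1; have := K_le_one hp0 hp1
  rw [abs_le]; unfold g; constructor <;> linarith

omit hp0 hp1 in
lemma g_comm (x y : ℕ) : g p x y = g p y x := by
  unfold g; rw [if_congr eq_comm rfl rfl]; ring

/-- the degenerate-kernel property -/
lemma hasSum_pg (c : ℕ) : HasSum (fun i => p i * g p i c) 0 := by
  have h1 : HasSum (fun i => p i * (if i = c then (1:ℝ) else 0)) (p c) := by
    have : (fun i => p i * (if i = c then (1:ℝ) else 0))
        = fun i => if i = c then p c else 0 := by
      funext i; by_cases h : i = c <;> simp [h]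
    rw [this]; exact hasSum_ite_eq c (p c)
  have h2 : HasSum (fun i => p i * p i) (∑' i, (p i) ^ 2) := by
    have := (sq_summable hp0 hp1).hasSum
    simpa [pow_two] using this
  have h3 : HasSum (fun i => p i * p c) (p c) := by
    simpa using hp1.mul_right (p c)
  have h4 : HasSum (fun i => p i * (∑' j, (p j) ^ 2)) (∑' j, (p j) ^ 2) := by
    simpa using hp1.mul_right (∑' j, (p j) ^ 2)
  have := ((h1.sub h2).sub h3).add h4
  have heq : (fun i => p i * (if i = c then (1:ℝ) else 0) - p i * p i - p i * p c
      + p i * (∑' j, (p j) ^ 2)) = fun i => p i * g p i c := by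
    funext i; unfold g; ring
  rw [heq] at this
  simpa using this

lemma tsum_pg (c : ℕ) : ∑' i, p i * g p i c = 0 := (hasSum_pg hp0 hp1 c).tsum_eq


lemma hasSum_h (a b : ℕ) :
    HasSum (fun i => ((if a = i then (1:ℝ) else 0) - p i) * ((if b = i then (1:ℝ) else 0) - p i))
      (g p a b) := by
  have H1 : HasSum (fun i => (if a = i then (1:ℝ) else 0) * (if b = i then (1:ℝ) else 0))
      (if a = b then (1:ℝ) else 0) := by
    have he : (fun i => (if a = i then (1:ℝ) else 0) * (if b = i then (1:ℝ) else 0))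
        = fun i => if i = a then (if a = b then (1:ℝ) else 0) else 0 := by
      funext i
      by_cases h : i = a
      · subst h; simp [eq_comm]
      · have : ¬ a = i := fun e => h e.symm
        simp [this, h]
    rw [he]; exact hasSum_ite_eq a _
  have H2 : HasSum (fun i => (if a = i then (1:ℝ) else 0) * p i) (p a) := by
    have he : (fun i => (if a = i then (1:ℝ) else 0) * p i)
        = fun i => if i = a then p a else 0 := by
      funext i
      by_cases h : i = a
      · subst h; simp
      · have : ¬ a = i := fun e => h e.symm
        simp [this, h]
    rw [he]; exact hasSum_ite_eq a _
  have H3 : HasSum (fun i => (if b = i then (1:ℝ) else 0) * p i) (p b) := by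
    have he : (fun i => (if b = i then (1:ℝ) else 0) * p i)
        = fun i => if i = b then p b else 0 := by
      funext i
      by_cases h : i = b
      · subst h; simp
      · have : ¬ b = i := fun e => h e.symm
        simp [this, h]
    rw [he]; exact hasSum_ite_eq b _
  have H4 : HasSum (fun i => p i * p i) (∑' i, (p i) ^ 2) := by
    simpa [pow_two] using (sq_summable hp0 hp1).hasSum
  have H := ((H1.sub H2).sub H3).add H4
  have heq : (fun i => (if a = i then (1:ℝ) else 0) * (if b = i then (1:ℝ) else 0)
        - (if a = i then (1:ℝ) else 0) * p i - (if b = i then (1:ℝ) else 0) * p i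
        + p i * p i)
      = fun i => ((if a = i then (1:ℝ) else 0) - p i) * ((if b = i then (1:ℝ) else 0) - p i) := by
    funext i; ring
  rw [heq] at H
  have : (if a = b then (1:ℝ) else 0) - p a - p b + ∑' i, (p i) ^ 2 = g p a b := rfl
  rwa [this] at H

lemma keyA {m : ℕ} (hm : 0 < m) (a : Fin m → ℕ) :
    (∑' i, ((1 / (m:ℝ)) * ∑ j : Fin m, (if a j = i then (1:ℝ) else 0) - p i) ^ 2)
      = (1 / (m:ℝ)) ^ 2 * ∑ j : Fin m, ∑ k : Fin m, g p (a j) (a k) := by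
  have hm' : (m:ℝ) ≠ 0 := Nat.cast_ne_zero.2 hm.ne'
  have step1 : ∀ i, ((1 / (m:ℝ)) * ∑ j : Fin m, (if a j = i then (1:ℝ) else 0) - p i) ^ 2
      = (1 / (m:ℝ)) ^ 2 * ∑ j : Fin m, ∑ k : Fin m,
          ((if a j = i then (1:ℝ) else 0) - p i) * ((if a k = i then (1:ℝ) else 0) - p i) := by
    intro i
    have h0 : (1 / (m:ℝ)) * ∑ j : Fin m, (if a j = i then (1:ℝ) else 0) - p i
        = (1 / (m:ℝ)) * ∑ j : Fin m, ((if a j = i then (1:ℝ) else 0) - p i) := by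
      rw [Finset.sum_sub_distrib, Finset.sum_const, Finset.card_univ, Fintype.card_fin]
      rw [nsmul_eq_mul, mul_sub, one_div, inv_mul_cancel_left₀ hm']
    rw [h0, mul_pow]
    congr 1
    rw [sq, Finset.sum_mul_sum]
  have H : HasSum (fun i => (1 / (m:ℝ)) ^ 2 * ∑ j : Fin m, ∑ k : Fin m,
        ((if a j = i then (1:ℝ) else 0) - p i) * ((if a k = i then (1:ℝ) else 0) - p i))
      ((1 / (m:ℝ)) ^ 2 * ∑ j : Fin m, ∑ k : Fin m, g p (a j) (a k)) := by
    refine HasSum.mul_left _ ?_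
    refine hasSum_sum (fun j _ => ?_)
    exact hasSum_sum (fun k _ => hasSum_h hp0 hp1 (a j) (a k))
  have := H.tsum_eq
  rw [← this]
  exact tsum_congr step1

end


def W {n m : ℕ} (v : Fin n → Fin m × Fin m) : Fin n × Bool → Fin m :=
  fun x => if x.2 then (v x.1).1 else (v x.1).2

lemma good_card {n m : ℕ} (hn : 0 < n) (hm : 0 < m) :
    (Finset.univ.filter (fun v : Fin n → Fin m × Fin m =>
        ∀ x : Fin n × Bool, ∃ y, y ≠ x ∧ W v y = W v x)).card
      ≤ n ^ (2 * n) * m ^ n := by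
  classical
  set Good := Finset.univ.filter (fun v : Fin n → Fin m × Fin m =>
        ∀ x : Fin n × Bool, ∃ y, y ≠ x ∧ W v y = W v x) with hGood
  have key : ∀ v ∈ Good, (Finset.image (W v) Finset.univ).card ≤ n := by
    intro v hv
    rw [hGood, Finset.mem_filter] at hv
    have hfib : (Finset.univ : Finset (Fin n × Bool)).card
        = ∑ d ∈ Finset.image (W v) Finset.univ,
            (Finset.univ.filter (fun x => W v x = d)).card :=
      Finset.card_eq_sum_card_fiberwise
        (fun x _ => Finset.mem_image_of_mem _ (Finset.mem_univ x))
    have hcard : (Finset.univ : Finset (Fin n × Bool)).card = 2 * n := by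
      simp [Finset.card_univ]
      omega
    have h2 : ∀ d ∈ Finset.image (W v) Finset.univ,
        2 ≤ (Finset.univ.filter (fun x => W v x = d)).card := by
      intro d hd
      obtain ⟨x, -, hx⟩ := Finset.mem_image.1 hd
      obtain ⟨y, hy, hyx⟩ := hv.2 x
      have hxy : x ∈ Finset.univ.filter (fun z => W v z = d) := by
        simp [hx]
      have hyy : y ∈ Finset.univ.filter (fun z => W v z = d) := by
        simp [hyx, hx]
      exact Finset.one_lt_card.2 ⟨x, hxy, y, hyy, fun e => hy e.symm⟩
    have : 2 * (Finset.image (W v) Finset.univ).card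
        ≤ ∑ d ∈ Finset.image (W v) Finset.univ,
            (Finset.univ.filter (fun x => W v x = d)).card := by
      rw [Nat.mul_comm]
      calc (Finset.image (W v) Finset.univ).card * 2
          = ∑ _d ∈ Finset.image (W v) Finset.univ, 2 := by simp [Finset.sum_const, Nat.smul_one_eq_cast, Nat.smul_one_eq_cast]
        _ ≤ _ := Finset.sum_le_sum h2
    omega
  -- injection into (Fin n × Bool → Fin n) × (Fin n → Fin m)
  have hinj : ∀ v ∈ Good, ∀ v' ∈ Good,
      (fun x : Fin n × Bool =>
          if h : ((Finset.image (W v) Finset.univ).toList.idxOf (W v x)) < n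
          then (⟨_, h⟩ : Fin n) else ⟨0, hn⟩,
       fun t : Fin n => (Finset.image (W v) Finset.univ).toList.getD t (⟨0, hm⟩ : Fin m))
      = (fun x : Fin n × Bool =>
          if h : ((Finset.image (W v') Finset.univ).toList.idxOf (W v' x)) < n
          then (⟨_, h⟩ : Fin n) else ⟨0, hn⟩,
       fun t : Fin n => (Finset.image (W v') Finset.univ).toList.getD t (⟨0, hm⟩ : Fin m))
      → v = v' := by
    intro v hv v' hv' heq
    have recon : ∀ u, u ∈ Good → ∀ x : Fin n × Bool,
        (Finset.image (W u) Finset.univ).toList.getD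
          (if h : ((Finset.image (W u) Finset.univ).toList.idxOf (W u x)) < n
           then (⟨_, h⟩ : Fin n) else ⟨0, hn⟩).val (⟨0, hm⟩ : Fin m) = W u x := by
      intro u hu x
      set l := (Finset.image (W u) Finset.univ).toList with hl
      have hmem : W u x ∈ l := by
        rw [hl, Finset.mem_toList]
        exact Finset.mem_image_of_mem _ (Finset.mem_univ x)
      have hlt : l.idxOf (W u x) < l.length := List.idxOf_lt_length_iff.2 hmem
      have hlen : l.length ≤ n := by
        rw [hl, Finset.length_toList]
        exact key u hu
      have hlt' : l.idxOf (W u x) < n := lt_of_lt_of_le hlt hlen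
      rw [dif_pos hlt']
      simp only
      rw [List.getD_eq_getElem l _ hlt]
      exact List.getElem_idxOf hlt
    have hW : W v = W v' := by
      funext x
      have h1 := recon v hv x
      have h2 := recon v' hv' x
      have e1 : (fun x : Fin n × Bool =>
          if h : ((Finset.image (W v) Finset.univ).toList.idxOf (W v x)) < n
          then (⟨_, h⟩ : Fin n) else ⟨0, hn⟩)
        = (fun x : Fin n × Bool =>
          if h : ((Finset.image (W v') Finset.univ).toList.idxOf (W v' x)) < n
          then (⟨_, h⟩ : Fin n) else ⟨0, hn⟩) := congrArg Prod.fst heq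
      have e2 : (fun t : Fin n => (Finset.image (W v) Finset.univ).toList.getD t (⟨0, hm⟩ : Fin m))
        = (fun t : Fin n => (Finset.image (W v') Finset.univ).toList.getD t (⟨0, hm⟩ : Fin m)) :=
        congrArg Prod.snd heq
      rw [← h1, ← h2, congrFun e1 x, congrFun e2]
    funext t
    have h1 : (v t).1 = (v' t).1 := by
      have := congrFun hW (t, true); simpa [W] using this
    have h2 : (v t).2 = (v' t).2 := by
      have := congrFun hW (t, false); simpa [W] using this
    exact Prod.ext h1 h2
  calc Good.card
      ≤ (Finset.univ : Finset ((Fin n × Bool → Fin n) × (Fin n → Fin m))).card :=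
        Finset.card_le_card_of_injOn _ (fun v _ => Finset.mem_univ _)
          (fun v hv v' hv' h => hinj v hv v' hv' h)
    _ = n ^ (2 * n) * m ^ n := by
        simp only [Finset.card_univ, Fintype.card_prod, Fintype.card_fun,
          Fintype.card_bool, Fintype.card_fin]
        ring

lemma integrable_of_bound {α : Type*} [MeasurableSpace α] (μ : Measure α) [IsFiniteMeasure μ]
    (f : α → ℝ) (hf : AEStronglyMeasurable f μ) (C : ℝ) (h : ∀ x, |f x| ≤ C) :
    Integrable f μ :=
  Integrable.mono' (integrable_const C) hf
    (Filter.Eventually.of_forall (by simpa [Real.norm_eq_abs] using h))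

lemma abs_prod_g_le {p : ℕ → ℝ} (hp0 : ∀ i, 0 ≤ p i) (hp1 : HasSum p 1)
    {α : Type*} (s : Finset α) (f1 f2 : α → ℕ) :
    |∏ t ∈ s, g p (f1 t) (f2 t)| ≤ 4 ^ s.card := by
  rw [Finset.abs_prod]
  calc ∏ t ∈ s, |g p (f1 t) (f2 t)| ≤ ∏ _t ∈ s, (4:ℝ) :=
        Finset.prod_le_prod (fun t _ => abs_nonneg _) (fun t _ => abs_g_le hp0 hp1 _ _)
    _ = 4 ^ s.card := by rw [Finset.prod_const]

lemma vanish {Ω : Type*} [MeasurableSpace Ω] (P : Measure Ω) [IsProbabilityMeasure P]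
    {p : ℕ → ℝ} (hp0 : ∀ i, 0 ≤ p i) (hp1 : HasSum p 1) {m : ℕ}
    (ξ : Fin m → Ω → ℕ) (hmeas : ∀ j, Measurable (ξ j))
    (hindep : iIndepFun ξ P)
    (hlaw : ∀ j i, P {ω | ξ j ω = i} = ENNReal.ofReal (p i))
    {n : ℕ} (v : Fin n → Fin m × Fin m)
    (x : Fin n × Bool) (hx : ∀ y, W v y = W v x → y = x) :
    ∫ ω, ∏ t : Fin n, g p (ξ (v t).1 ω) (ξ (v t).2 ω) ∂P = 0 := by
  classical
  set j₀ : Fin m := W v x with hj₀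
  set t₀ : Fin n := x.1 with ht₀
  -- the partner index
  set c : Fin m := W v (t₀, !x.2) with hc
  have hcne : c ≠ j₀ := by
    intro h
    have h2 := congrArg Prod.snd (hx (t₀, !x.2) h)
    simp at h2
  have hothers : ∀ t : Fin n, t ≠ t₀ → (v t).1 ≠ j₀ ∧ (v t).2 ≠ j₀ := by
    intro t ht
    constructor
    · intro h
      have : W v (t, true) = W v x := by simpa [W, hj₀] using h
      have := hx _ this
      exact ht (congrArg Prod.fst this)
    · intro h
      have : W v (t, false) = W v x := by simpa [W, hj₀] using h
      have := hx _ this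
      exact ht (congrArg Prod.fst this)
  set Y : Ω → ℕ := ξ j₀ with hY
  set Z : Ω → (Fin m → ℕ) := fun ω i => if i = j₀ then 0 else ξ i ω with hZ
  have hYmeas : Measurable Y := hmeas j₀
  have hZmeas : Measurable Z := by
    refine measurable_pi_lambda _ (fun i => ?_)
    simp only [hZ]
    by_cases h : i = j₀
    · simpa [h] using measurable_const
    · simpa [h] using hmeas i
  -- independence of Y and Z
  have hYZ : IndepFun Y Z P := by
    have hdisj : Disjoint ({j₀} : Finset (Fin m)) (Finset.univ.erase j₀) := by
      simp [Finset.disjoint_left]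
    have base := hindep.indepFun_finset {j₀} (Finset.univ.erase j₀) hdisj hmeas
    have hφ : Measurable (fun u : ({j₀} : Finset (Fin m)) → ℕ =>
        u ⟨j₀, Finset.mem_singleton_self j₀⟩) := measurable_of_countable _
    have hψ : Measurable (fun u : ↥(Finset.univ.erase j₀ : Finset (Fin m)) → ℕ =>
        (fun i : Fin m => if h : i = j₀ then 0 else
          u ⟨i, Finset.mem_erase.2 ⟨h, Finset.mem_univ i⟩⟩)) := measurable_of_countable _
    have h2 := base.comp hφ hψ
    have hz : Z = (fun u : ↥(Finset.univ.erase j₀ : Finset (Fin m)) → ℕ =>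
        (fun i : Fin m => if h : i = j₀ then 0 else
          u ⟨i, Finset.mem_erase.2 ⟨h, Finset.mem_univ i⟩⟩))
        ∘ (fun a (i : ↥(Finset.univ.erase j₀ : Finset (Fin m))) => ξ i a) := by
      funext ω
      funext i
      by_cases h : i = j₀ <;> simp [hZ, h, Function.comp]
    rw [hz]
    exact h2
  -- package the integrand
  set Φ : ℕ × (Fin m → ℕ) → ℝ := fun q =>
    g p q.1 (q.2 c) * ∏ t ∈ Finset.univ.erase t₀, g p (q.2 (v t).1) (q.2 (v t).2) with hΦ
  have hpoint : ∀ ω, (∏ t : Fin n, g p (ξ (v t).1 ω) (ξ (v t).2 ω)) = Φ (Y ω, Z ω) := by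
    intro ω
    rw [← Finset.mul_prod_erase Finset.univ _ (Finset.mem_univ t₀)]
    have hfac : g p (ξ (v t₀).1 ω) (ξ (v t₀).2 ω) = g p (Y ω) (Z ω c) := by
      have hZc : Z ω c = ξ c ω := by simp [hZ, hcne]
      rcases x with ⟨t', b⟩
      cases b
      · -- x.2 = false : j₀ = (v t₀).2, c = (v t₀).1
        have h1 : (v t₀).2 = j₀ := by simp [hj₀, W, ht₀]
        have h2 : (v t₀).1 = c := by simp [hc, W, ht₀]
        rw [h1, h2, hZc, g_comm]
      · have h1 : (v t₀).1 = j₀ := by simp [hj₀, W, ht₀]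
        have h2 : (v t₀).2 = c := by simp [hc, W, ht₀]
        rw [h1, h2, hZc]
    rw [hfac]
    congr 1
    refine Finset.prod_congr rfl (fun t ht => ?_)
    obtain ⟨h1, h2⟩ := hothers t (Finset.mem_erase.1 ht).1
    simp [hZ, h1, h2]
  have hΦmeas : Measurable Φ := measurable_of_countable _
  haveI : IsProbabilityMeasure (P.map Y) := Measure.isProbabilityMeasure_map hYmeas.aemeasurable
  haveI : IsProbabilityMeasure (P.map Z) := Measure.isProbabilityMeasure_map hZmeas.aemeasurable
  have hΦbound : ∀ q, |Φ q| ≤ 4 * 4 ^ (Finset.univ.erase t₀).card := by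
    intro q
    rw [hΦ, abs_mul]
    have h1 := abs_g_le hp0 hp1 q.1 (q.2 c)
    have h2 := abs_prod_g_le hp0 hp1 (Finset.univ.erase t₀) (fun t => q.2 (v t).1)
      (fun t => q.2 (v t).2)
    have h3 : (0:ℝ) ≤ |g p q.1 (q.2 c)| := abs_nonneg _
    have h4 : (0:ℝ) ≤ |∏ t ∈ Finset.univ.erase t₀, g p (q.2 (v t).1) (q.2 (v t).2)| :=
      abs_nonneg _
    nlinarith
  have hΦint : Integrable Φ ((P.map Y).prod (P.map Z)) :=
    integrable_of_bound _ _ hΦmeas.aestronglyMeasurable _ hΦbound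
  -- the inner integral vanishes
  have hinner : ∀ z : Fin m → ℕ, ∫ a, Φ (a, z) ∂(P.map Y) = 0 := by
    intro z
    have : (fun a => Φ (a, z))
        = fun a => g p a (z c) * ∏ t ∈ Finset.univ.erase t₀, g p (z (v t).1) (z (v t).2) := rfl
    rw [this, integral_mul_const]
    have hg_int : Integrable (fun a => g p a (z c)) (P.map Y) :=
      integrable_of_bound _ _ (measurable_of_countable _).aestronglyMeasurable 4
        (fun a => abs_g_le hp0 hp1 a (z c))
    rw [integral_countable' hg_int]
    have hsingle : ∀ a : ℕ, ((P.map Y) {a}).toReal = p a := by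
      intro a
      rw [Measure.map_apply hYmeas (measurableSet_singleton a)]
      have : Y ⁻¹' {a} = {ω | ξ j₀ ω = a} := rfl
      rw [this, hlaw j₀ a, ENNReal.toReal_ofReal (hp0 a)]
    have : (∑' a : ℕ, (P.map Y).real {a} • g p a (z c)) = ∑' a : ℕ, p a * g p a (z c) := by
      refine tsum_congr (fun a => ?_)
      rw [Measure.real, hsingle a, smul_eq_mul]
    rw [this, tsum_pg hp0 hp1 (z c), zero_mul]
  calc ∫ ω, ∏ t : Fin n, g p (ξ (v t).1 ω) (ξ (v t).2 ω) ∂P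
      = ∫ ω, Φ (Y ω, Z ω) ∂P := by
        exact integral_congr_ae (Filter.Eventually.of_forall hpoint)
    _ = ∫ q, Φ q ∂(P.map (fun ω => (Y ω, Z ω))) := by
        rw [integral_map (hYmeas.prodMk hZmeas).aemeasurable hΦmeas.aestronglyMeasurable]
    _ = ∫ q, Φ q ∂((P.map Y).prod (P.map Z)) := by
        rw [(indepFun_iff_map_prod_eq_prod_map_map hYmeas.aemeasurable hZmeas.aemeasurable).1 hYZ]
    _ = ∫ z, ∫ a, Φ (a, z) ∂(P.map Y) ∂(P.map Z) := integral_prod_symm Φ hΦint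
    _ = 0 := by
        rw [integral_congr_ae (Filter.Eventually.of_forall hinner)]
        simp


end Stmt16Aux

open Stmt16Aux

theorem stmt16 :
    ∀ n : ℕ, 0 < n → ∃ γ : ℝ, 0 < γ ∧
      ∀ (Ω : Type*) (_ : MeasurableSpace Ω) (P : Measure Ω),
        IsProbabilityMeasure P →
        ∀ p : ℕ → ℝ, (∀ i, 0 ≤ p i) → HasSum p 1 →
        ∀ m : ℕ, 0 < m →
        ∀ ξ : Fin m → Ω → ℕ, (∀ j, Measurable (ξ j)) →
        iIndepFun ξ P →
        (∀ j i, P {ω | ξ j ω = i} = ENNReal.ofReal (p i)) →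
        ∫⁻ ω, ENNReal.ofReal
            ((∑' i, ((1 / (m : ℝ)) * ∑ j : Fin m,
                (if ξ j ω = i then (1 : ℝ) else 0) - p i) ^ 2) ^ n) ∂P
          ≤ ENNReal.ofReal (γ / (m : ℝ) ^ n) := by
  classical
  intro n hn
  have hn' : (0:ℝ) < n := by exact_mod_cast hn
  refine ⟨(n:ℝ) ^ (2*n) * 4 ^ n, by positivity, ?_⟩
  intro Ω mΩ P hP p hp0 hp1 m hm ξ hmeas hindep hlaw
  haveI := hP
  have hm' : ((m:ℝ)) ≠ 0 := by
    have : (0:ℝ) < m := by exact_mod_cast hm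
    exact this.ne'
  set S : Ω → ℝ := fun ω => (1 / (m:ℝ)) ^ 2 * ∑ j : Fin m, ∑ k : Fin m, g p (ξ j ω) (ξ k ω)
    with hSdef
  have hS : ∀ ω, (∑' i, ((1 / (m : ℝ)) * ∑ j : Fin m,
      (if ξ j ω = i then (1 : ℝ) else 0) - p i) ^ 2) = S ω :=
    fun ω => keyA hp0 hp1 hm (fun j => ξ j ω)
  set F : (Fin n → Fin m × Fin m) → Ω → ℝ :=
    fun v ω => ∏ t : Fin n, g p (ξ (v t).1 ω) (ξ (v t).2 ω) with hFdef
  -- expansion of S^n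
  have hexpand : ∀ ω, S ω ^ n = (1 / (m:ℝ)) ^ (2*n) *
      ∑ v : Fin n → Fin m × Fin m, F v ω := by
    intro ω
    have h1 : S ω = (1 / (m:ℝ)) ^ 2 * ∑ q : Fin m × Fin m, g p (ξ q.1 ω) (ξ q.2 ω) := by
      rw [hSdef]
      simp only
      rw [Fintype.sum_prod_type]
    have h2 : (∑ q : Fin m × Fin m, g p (ξ q.1 ω) (ξ q.2 ω)) ^ n
        = ∑ v : Fin n → Fin m × Fin m, F v ω := by
      have h3 := Finset.prod_univ_sum (fun _ : Fin n => (Finset.univ : Finset (Fin m × Fin m)))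
        (fun _ q => g p (ξ q.1 ω) (ξ q.2 ω))
      rw [Finset.prod_const, Finset.card_univ, Fintype.card_fin] at h3
      rw [h3, Fintype.piFinset_univ]
    rw [h1, mul_pow, ← pow_mul, h2]
  -- integrability
  have hFmeas : ∀ v, Measurable (F v) := by
    intro v
    refine Finset.measurable_prod _ (fun t _ => ?_)
    exact (measurable_of_countable (fun q : ℕ × ℕ => g p q.1 q.2)).comp
      ((hmeas (v t).1).prodMk (hmeas (v t).2))
  have hFbound : ∀ v ω, |F v ω| ≤ 4 ^ n := by
    intro v ω
    have := abs_prod_g_le hp0 hp1 (Finset.univ : Finset (Fin n))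
      (fun t => ξ (v t).1 ω) (fun t => ξ (v t).2 ω)
    rwa [Finset.card_univ, Fintype.card_fin] at this
  have hFint : ∀ v, Integrable (F v) P := fun v =>
    integrable_of_bound P _ (hFmeas v).aestronglyMeasurable _ (hFbound v)
  have hSn_int : Integrable (fun ω => S ω ^ n) P := by
    have : (fun ω => S ω ^ n) = fun ω => (1 / (m:ℝ)) ^ (2*n) *
        ∑ v : Fin n → Fin m × Fin m, F v ω := funext hexpand
    rw [this]
    exact (integrable_finset_sum _ (fun v _ => hFint v)).const_mul _
  -- expectation
  have hexp : ∫ ω, S ω ^ n ∂P = (1 / (m:ℝ)) ^ (2*n) *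
      ∑ v : Fin n → Fin m × Fin m, ∫ ω, F v ω ∂P := by
    calc ∫ ω, S ω ^ n ∂P
        = ∫ ω, (1 / (m:ℝ)) ^ (2*n) * ∑ v : Fin n → Fin m × Fin m, F v ω ∂P :=
          integral_congr_ae (Filter.Eventually.of_forall hexpand)
      _ = (1 / (m:ℝ)) ^ (2*n) * ∫ ω, ∑ v : Fin n → Fin m × Fin m, F v ω ∂P :=
          integral_const_mul _ _
      _ = (1 / (m:ℝ)) ^ (2*n) * ∑ v : Fin n → Fin m × Fin m, ∫ ω, F v ω ∂P := by
          rw [integral_finset_sum _ (fun v _ => hFint v)]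
  -- kill the bad terms
  set Good : Finset (Fin n → Fin m × Fin m) := Finset.univ.filter
    (fun v => ∀ x : Fin n × Bool, ∃ y, y ≠ x ∧ W v y = W v x) with hGoodDef
  have hsum_good : ∑ v : Fin n → Fin m × Fin m, ∫ ω, F v ω ∂P
      = ∑ v ∈ Good, ∫ ω, F v ω ∂P := by
    rw [hGoodDef]
    refine (Finset.sum_filter_of_ne (fun v _ hne => ?_)).symm
    by_contra hbad
    push_neg at hbad
    obtain ⟨x, hx⟩ := hbad
    refine hne ?_
    refine vanish P hp0 hp1 ξ hmeas hindep hlaw v x (fun y hy => ?_)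
    by_contra hne'
    exact hx y hne' hy
  -- bound the good terms
  have habs : ∀ v, |∫ ω, F v ω ∂P| ≤ 4 ^ n := by
    intro v
    have := norm_integral_le_of_norm_le_const (μ := P) (f := F v) (C := 4 ^ n)
      (Filter.Eventually.of_forall (fun ω => by
        rw [Real.norm_eq_abs]; exact hFbound v ω))
    simpa using this
  have hTbound : (∑ v ∈ Good, ∫ ω, F v ω ∂P) ≤ (Good.card : ℝ) * 4 ^ n := by
    calc (∑ v ∈ Good, ∫ ω, F v ω ∂P) ≤ ∑ v ∈ Good, |∫ ω, F v ω ∂P| :=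
          Finset.sum_le_sum (fun v _ => le_abs_self _)
      _ ≤ ∑ _v ∈ Good, (4:ℝ) ^ n := Finset.sum_le_sum (fun v _ => habs v)
      _ = (Good.card : ℝ) * 4 ^ n := by rw [Finset.sum_const, nsmul_eq_mul]
  have hcard : (Good.card : ℝ) ≤ (n:ℝ) ^ (2*n) * (m:ℝ) ^ n := by
    have := good_card (n := n) (m := m) hn hm
    rw [← hGoodDef] at this
    calc (Good.card : ℝ) ≤ ((n ^ (2*n) * m ^ n : ℕ) : ℝ) := by exact_mod_cast this
      _ = (n:ℝ) ^ (2*n) * (m:ℝ) ^ n := by push_cast; ring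
  -- final real bound
  have hfinal : ∫ ω, S ω ^ n ∂P ≤ ((n:ℝ) ^ (2*n) * 4 ^ n) / (m:ℝ) ^ n := by
    rw [hexp, hsum_good]
    have h1 : (0:ℝ) ≤ (1 / (m:ℝ)) ^ (2*n) := by positivity
    calc (1 / (m:ℝ)) ^ (2*n) * ∑ v ∈ Good, ∫ ω, F v ω ∂P
        ≤ (1 / (m:ℝ)) ^ (2*n) * ((Good.card : ℝ) * 4 ^ n) := by
          exact mul_le_mul_of_nonneg_left hTbound h1
      _ ≤ (1 / (m:ℝ)) ^ (2*n) * (((n:ℝ) ^ (2*n) * (m:ℝ) ^ n) * 4 ^ n) := by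
          refine mul_le_mul_of_nonneg_left ?_ h1
          exact mul_le_mul_of_nonneg_right hcard (by positivity)
      _ = ((n:ℝ) ^ (2*n) * 4 ^ n) / (m:ℝ) ^ n := by
          field_simp
          rw [← pow_mul, mul_comm n 2, ← mul_pow, one_div, inv_mul_cancel₀ hm', one_pow]
  -- convert to lintegral
  have hS_nonneg : ∀ ω, 0 ≤ S ω ^ n := by
    intro ω
    have : 0 ≤ S ω := by
      rw [← hS ω]
      exact tsum_nonneg (fun i => sq_nonneg _)
    positivity
  calc ∫⁻ ω, ENNReal.ofReal
          ((∑' i, ((1 / (m : ℝ)) * ∑ j : Fin m,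
              (if ξ j ω = i then (1 : ℝ) else 0) - p i) ^ 2) ^ n) ∂P
      = ∫⁻ ω, ENNReal.ofReal (S ω ^ n) ∂P := by
        refine lintegral_congr (fun ω => ?_)
        rw [hS ω]
    _ = ENNReal.ofReal (∫ ω, S ω ^ n ∂P) :=
        (ofReal_integral_eq_lintegral_ofReal hSn_int
          (Filter.Eventually.of_forall hS_nonneg)).symm
    _ ≤ ENNReal.ofReal (((n:ℝ) ^ (2*n) * 4 ^ n) / (m:ℝ) ^ n) :=
        ENNReal.ofReal_le_ofReal hfinal
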